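/- Let a ≤ b and c ≤ d be integers such that [a - d, b - c] ∩ [2,4] ≠ ∅, and let k be an integer with max{a-2, c} ≤ k ≤ min{b, d+2}. Then at least one of the following holds: (i) k + 2 ∈ [a,b] and [k-2,k] ∩ [c,d] ≠ ∅; (ii) k = b - 1 and ([b-3, b-2] ∩ [c,d] ≠ ∅); (iii) k = b and b - 2 ∈ [c,d]. In particular there exist σ_l ∈ [a,b], σ_r ∈ [c,d] with σ_l - σ_r ∈ [2,4], σ_l - k ∈ {0,1,2}, and k - σ_r ∈ {0,1,2} with (σ_l - k) + (k - σ_r) = σ_l - σ_r. -/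
import Mathlib


theorem stmt_15 (a b c d : ℤ) (hab : a ≤ b) (hcd : c ≤ d)
    (hcond : (Set.Icc (a - d) (b - c) ∩ Set.Icc 2 4).Nonempty)
    (k : ℤ) (hk1 : max (a - 2) c ≤ k) (hk2 : k ≤ min b (d + 2)) :
    ((k + 2 ∈ Set.Icc a b ∧ (Set.Icc (k - 2) k ∩ Set.Icc c d).Nonempty) ∨
      (k = b - 1 ∧ (Set.Icc (b - 3) (b - 2) ∩ Set.Icc c d).Nonempty) ∨
      (k = b ∧ b - 2 ∈ Set.Icc c d)) ∧
    (∃ σl σr : ℤ, σl ∈ Set.Icc a b ∧ σr ∈ Set.Icc c d ∧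
      2 ≤ σl - σr ∧ σl - σr ≤ 4 ∧
      σl - k ∈ ({0, 1, 2} : Set ℤ) ∧ k - σr ∈ ({0, 1, 2} : Set ℤ) ∧
      (σl - k) + (k - σr) = σl - σr) := by
  obtain ⟨x, hx⟩ := hcond
  simp only [Set.mem_inter_iff, Set.mem_Icc] at hx
  simp only [max_le_iff, le_min_iff] at hk1 hk2
  constructor
  · rcases le_or_gt (k + 2) b with h | h
    · refine Or.inl ⟨by simp only [Set.mem_Icc]; omega, ⟨max c (k - 2), ?_⟩⟩
      simp only [Set.mem_inter_iff, Set.mem_Icc]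
      omega
    · rcases eq_or_lt_of_le hk2.1 with h' | h'
      · refine Or.inr (Or.inr ⟨h', ?_⟩)
        simp only [Set.mem_Icc]; omega
      · refine Or.inr (Or.inl ⟨by omega, ⟨max c (b - 3), ?_⟩⟩)
        simp only [Set.mem_inter_iff, Set.mem_Icc]
        omega
  · refine ⟨min b (k + 2), max (max c (min b (k + 2) - 4)) (k - 2), ?_, ?_, ?_, ?_, ?_, ?_, ?_⟩ <;>
      first | omega | (simp only [Set.mem_Icc, Set.mem_insert_iff, Set.mem_singleton_iff]; omega)
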